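/- The metric G̃ on P̃ = ℝ^{2n+2} is an indefinite Einstein metric: its Ricci tensor satisfies Ric(G̃) = ((n+2)/2) · G̃ at every point (componentwise: R_{p_i p_j} = 0, R_{p_i x^j} = ((n+2)/2) δ_{ij}, R_{x^i x^j} = ((n+2)/2) p_i p_j), and its scalar curvature is the constant 𝓡(G̃) = (n+1)(n+2). -/

import Mathlib

/-!
Statement 13: The lifted metric `G̃` on `P̃ = ℝ^{2n+2}` is Einstein:
`Ric(G̃) = ((n+2)/2) G̃` (componentwise `R_{p_i p_j} = 0`,
`R_{p_i x^j} = ((n+2)/2) δ_{ij}`, `R_{x^i x^j} = ((n+2)/2) p_i p_j`) and its scalar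
curvature is the constant `(n+1)(n+2)`.
-/

abbrev Idx2 (n : ℕ) : Type := Fin (n + 1) ⊕ Fin (n + 1)
abbrev Pt2 (n : ℕ) : Type := Idx2 n → ℝ

/-- The lifted metric `G̃ = [[0, I], [I, p pᵀ]]`, block ordering `(p; x)`. -/
def Gt (n : ℕ) (m : Pt2 n) : Matrix (Idx2 n) (Idx2 n) ℝ :=
  Matrix.of fun a b =>
    match a, b with
    | Sum.inl _, Sum.inl _ => 0
    | Sum.inl i, Sum.inr j => if i = j then 1 else 0
    | Sum.inr i, Sum.inl j => if i = j then 1 else 0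
    | Sum.inr i, Sum.inr j => m (Sum.inl i) * m (Sum.inl j)

/-- Partial derivative `∂_a f (m)` of a scalar function on `P̃`. -/
noncomputable def pd {n : ℕ} (f : Pt2 n → ℝ) (m : Pt2 n) (a : Idx2 n) : ℝ :=
  fderiv ℝ f m (Pi.single a 1)


/-- explicit inverse -/
def Gi (n : ℕ) (m : Pt2 n) : Matrix (Idx2 n) (Idx2 n) ℝ :=
  Matrix.of fun a b =>
    match a, b with
    | Sum.inl i, Sum.inl j => -(m (Sum.inl i) * m (Sum.inl j))
    | Sum.inl i, Sum.inr j => if i = j then 1 else 0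
    | Sum.inr i, Sum.inl j => if i = j then 1 else 0
    | Sum.inr _, Sum.inr _ => 0

lemma Gt_mul_Gi (n : ℕ) (m : Pt2 n) : Gt n m * Gi n m = 1 := by
  ext a b
  cases a <;> cases b <;>
    simp [Matrix.mul_apply, Fintype.sum_sum_type, Gt, Gi, Matrix.one_apply,
      ite_mul, mul_ite, Finset.sum_ite_eq, Finset.sum_ite_eq', eq_comm]

lemma Gt_inv (n : ℕ) (m : Pt2 n) : (Gt n m)⁻¹ = Gi n m :=
  Matrix.inv_eq_right_inv (Gt_mul_Gi n m)

lemma Gi_mul_Gt (n : ℕ) (m : Pt2 n) : Gi n m * Gt n m = 1 :=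
  mul_eq_one_comm.mp (Gt_mul_Gi n m)

section pdlem
variable {n : ℕ} (m : Pt2 n) (a c d e : Idx2 n)

lemma hproj : HasFDerivAt (fun m' : Pt2 n => m' c)
    (ContinuousLinearMap.proj (R := ℝ) (φ := fun _ : Idx2 n => ℝ) c) m := by
  exact (ContinuousLinearMap.proj (R := ℝ) (φ := fun _ : Idx2 n => ℝ) c).hasFDerivAt (x := m)

lemma pd_eq {f : Pt2 n → ℝ} {L : Pt2 n →L[ℝ] ℝ} (h : HasFDerivAt f L m) :
    pd f m a = L (Pi.single a 1) := by rw [pd, h.fderiv]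

@[simp] lemma pd_const (r : ℝ) : pd (fun _ => r) m a = 0 := by
  rw [pd_eq m a (hasFDerivAt_const r m)]; simp

@[simp] lemma pd_c2 : pd (fun m' => m' c * m' d) m a =
    (if c = a then 1 else 0) * m d + m c * (if d = a then 1 else 0) := by
  rw [pd_eq m a (f := fun m' => m' c * m' d) ((hproj m c).mul (hproj m d))]
  simp [Pi.single_apply]; split_ifs <;> ring

@[simp] lemma pd_c3 : pd (fun m' => m' c * m' d * m' e) m a =
    ((if c = a then 1 else 0) * m d + m c * (if d = a then 1 else 0)) * m e
      + m c * m d * (if e = a then 1 else 0) := by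
  rw [pd_eq m a (f := fun m' => m' c * m' d * m' e) (((hproj m c).mul (hproj m d)).mul (hproj m e))]
  simp [Pi.single_apply]; split_ifs <;> ring

@[simp] lemma pd_lin2 (r e₁ e₂ : ℝ) :
    pd (fun m' => r * (e₁ * m' c + e₂ * m' d)) m a =
      r * (e₁ * (if c = a then 1 else 0) + e₂ * (if d = a then 1 else 0)) := by
  rw [pd_eq m a (f := fun m' => r * (e₁ * m' c + e₂ * m' d)) (((((hproj m c).const_mul e₁).add ((hproj m d).const_mul e₂)).const_mul r))]
  simp [Pi.single_apply]; split_ifs <;> ring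

end pdlem

/-- Christoffel symbols `Γ^α_{βγ} = ½ Σ_s G̃^{αs}(∂_β G̃_{γs} + ∂_γ G̃_{βs} - ∂_s G̃_{βγ})`. -/
noncomputable def ChristoffelT (n : ℕ) (m : Pt2 n) (α β γ : Idx2 n) : ℝ :=
  (1 / 2) * ∑ s, (Gt n m)⁻¹ α s *
    (pd (fun m' => Gt n m' γ s) m β + pd (fun m' => Gt n m' β s) m γ
      - pd (fun m' => Gt n m' β γ) m s)


/-- Closed form of the Christoffel symbols. -/
noncomputable def Chris (n : ℕ) (m : Pt2 n) : Idx2 n → Idx2 n → Idx2 n → ℝ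
  | Sum.inl i, Sum.inl b, Sum.inr c =>
      (1/2) * ((if b = c then (1:ℝ) else 0) * m (Sum.inl i)
        + (if b = i then 1 else 0) * m (Sum.inl c))
  | Sum.inl i, Sum.inr b, Sum.inl c =>
      (1/2) * ((if c = b then (1:ℝ) else 0) * m (Sum.inl i)
        + (if c = i then 1 else 0) * m (Sum.inl b))
  | Sum.inl i, Sum.inr b, Sum.inr c => m (Sum.inl i) * m (Sum.inl b) * m (Sum.inl c)
  | Sum.inr i, Sum.inr b, Sum.inr c =>
      (-(1/2)) * ((if i = b then (1:ℝ) else 0) * m (Sum.inl c)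
        + (if i = c then 1 else 0) * m (Sum.inl b))
  | _, _, _ => 0

lemma chris_eq (n : ℕ) (m : Pt2 n) (α β γ : Idx2 n) :
    ChristoffelT n m α β γ = Chris n m α β γ := by
  rw [ChristoffelT, Gt_inv]
  cases α <;> cases β <;> cases γ <;>
    simp [Fintype.sum_sum_type, Gt, Gi, Chris, mul_ite, ite_mul, mul_zero, zero_mul,
      add_zero, zero_add, Finset.sum_ite_eq, Finset.sum_ite_eq', Finset.mul_sum,
      Finset.sum_add_distrib, Finset.sum_sub_distrib, eq_comm] <;>
    (try ring) <;> (try (ring_nf; simp [mul_ite, ite_mul, mul_zero, zero_mul,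
      Finset.sum_add_distrib, Finset.sum_ite_eq, Finset.sum_ite_eq'])) <;> (try ring)
    <;> (simp only [mul_ite, ite_mul, mul_zero, zero_mul, Finset.sum_add_distrib,
      Finset.sum_ite_eq, Finset.sum_ite_eq', Finset.mem_univ, if_true]; ring)

/-- delta: 1 if `a = inl k` -/
noncomputable def dlt {n : ℕ} (a : Idx2 n) (k : Fin (n + 1)) : ℝ :=
  if Sum.inl k = a then 1 else 0

/-- derivative of Chris w.r.t. coordinate `a` -/
noncomputable def ChrisD (n : ℕ) (m : Pt2 n) (a : Idx2 n) : Idx2 n → Idx2 n → Idx2 n → ℝ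
  | Sum.inl i, Sum.inl b, Sum.inr c =>
      (1/2) * ((if b = c then (1:ℝ) else 0) * dlt a i + (if b = i then 1 else 0) * dlt a c)
  | Sum.inl i, Sum.inr b, Sum.inl c =>
      (1/2) * ((if c = b then (1:ℝ) else 0) * dlt a i + (if c = i then 1 else 0) * dlt a b)
  | Sum.inl i, Sum.inr b, Sum.inr c =>
      dlt a i * m (Sum.inl b) * m (Sum.inl c) + m (Sum.inl i) * dlt a b * m (Sum.inl c)
        + m (Sum.inl i) * m (Sum.inl b) * dlt a c
  | Sum.inr i, Sum.inr b, Sum.inr c =>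
      (-(1/2)) * ((if i = b then (1:ℝ) else 0) * dlt a c + (if i = c then 1 else 0) * dlt a b)
  | _, _, _ => 0

lemma pd_chris (n : ℕ) (m : Pt2 n) (a α β γ : Idx2 n) :
    pd (fun m' => Chris n m' α β γ) m a = ChrisD n m a α β γ := by
  cases α <;> cases β <;> cases γ <;>
    simp only [Chris, ChrisD, dlt, pd_lin2, pd_c3, pd_const] <;> ring

/-- The Ricci tensor of `G̃`. -/
noncomputable def RicciT (n : ℕ) (m : Pt2 n) (α β : Idx2 n) : ℝ :=
  (∑ μ, pd (fun m' => ChristoffelT n m' μ β α) m μ)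
    - (∑ μ, pd (fun m' => ChristoffelT n m' μ μ α) m β)
    + (∑ μ, ∑ γ, ChristoffelT n m μ μ γ * ChristoffelT n m γ β α)
    - (∑ μ, ∑ γ, ChristoffelT n m μ β γ * ChristoffelT n m γ μ α)


lemma ricci_eq (n : ℕ) (m : Pt2 n) (α β : Idx2 n) :
    RicciT n m α β = ((n + 2 : ℝ) / 2) * Gt n m α β := by
  rw [RicciT]
  simp only [chris_eq, pd_chris]
  cases α <;> cases β <;>
    simp [Fintype.sum_sum_type, Gt, Chris, ChrisD, dlt, mul_ite, ite_mul, mul_zero, zero_mul,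
      add_zero, zero_add, mul_add, add_mul, Finset.sum_ite_eq, Finset.sum_ite_eq',
      Finset.mul_sum, Finset.sum_add_distrib, Finset.sum_sub_distrib, eq_comm,
      Finset.sum_const, Finset.card_univ, Fintype.card_fin, nsmul_eq_mul] <;>
    (try ring) <;> (try (push_cast; ring))
    <;> (try (split_ifs <;> ring))

/-- The scalar curvature `𝓡 = Σ G̃^{αβ} R_{βα}`. -/
noncomputable def scalarCurvT (n : ℕ) (m : Pt2 n) : ℝ :=
  ∑ α, ∑ β, (Gt n m)⁻¹ α β * RicciT n m β α


lemma scalar_eq (n : ℕ) (m : Pt2 n) : scalarCurvT n m = (n + 1 : ℝ) * (n + 2 : ℝ) := by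
  rw [scalarCurvT]
  simp only [Gt_inv, ricci_eq]
  have h1 : ∀ α β : Idx2 n, Gi n m α β * (((n : ℝ) + 2)/2 * Gt n m β α)
      = ((n : ℝ) + 2)/2 * (Gi n m α β * Gt n m β α) := fun _ _ => by ring
  simp only [h1, ← Finset.mul_sum]
  have h2 : ∀ α : Idx2 n, ∑ β, Gi n m α β * Gt n m β α = 1 := fun α => by
    rw [← Matrix.mul_apply, Gi_mul_Gt]; simp [Matrix.one_apply]
  simp only [h2, Finset.sum_const, Finset.card_univ, nsmul_eq_mul, mul_one]
  simp [Fintype.card_sum]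
  push_cast
  ring

theorem lifted_metric_is_einstein (n : ℕ) (hn : 1 ≤ n) (m : Pt2 n) :
    (∀ α β, RicciT n m α β = ((n + 2 : ℝ) / 2) * Gt n m α β) ∧
    (∀ i j, RicciT n m (Sum.inl i) (Sum.inl j) = 0) ∧
    (∀ i j : Fin (n + 1), RicciT n m (Sum.inl i) (Sum.inr j) =
      ((n + 2 : ℝ) / 2) * (if i = j then 1 else 0)) ∧
    (∀ i j, RicciT n m (Sum.inr i) (Sum.inr j) =
      ((n + 2 : ℝ) / 2) * (m (Sum.inl i) * m (Sum.inl j))) ∧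
    scalarCurvT n m = (n + 1 : ℝ) * (n + 2 : ℝ) := by
  obtain ⟨h1,h2,h3⟩ : (∀ i j, RicciT n m (Sum.inl i) (Sum.inl j) = 0) ∧
      (∀ i j : Fin (n + 1), RicciT n m (Sum.inl i) (Sum.inr j) =
        ((n + 2 : ℝ) / 2) * (if i = j then 1 else 0)) ∧
      (∀ i j, RicciT n m (Sum.inr i) (Sum.inr j) =
        ((n + 2 : ℝ) / 2) * (m (Sum.inl i) * m (Sum.inl j))) := by
    refine ⟨fun i j => ?_, fun i j => ?_, fun i j => ?_⟩ <;> rw [ricci_eq] <;>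
      simp [Gt, mul_ite, mul_one, mul_zero]
  exact ⟨ricci_eq n m, h1, h2, h3, scalar_eq n m⟩
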